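/- Let λ_I, μ_I, ω > 0 be real with λ_I + 2μ_I > 0, set c_I = (λ_I + μ_I)/(λ_I + 2μ_I), let G₁₁ᴴ, G₁₂ᴴ, G₂₁ᴴ, G₂₂ᴴ ∈ ℂ and H > 0, and define G₂₁(x) = −(c_I/2)G₁₁ᴴ(x − H) + G₂₁ᴴ, G₂₂(x) = −(c_I/2)G₁₂ᴴ(x − H) + G₂₂ᴴ. For ξ, q_P, q_S ∈ ℂ with q_P² = ω²/(λ_I + 2μ_I) − ξ², q_S² = ω²/μ_I − ξ², Im q_P > 0, Im q_S > 0, define the 2×2 matrix ℋ₀(x, ξ) with first column (G₂₁(x) + i q_P (μ_I/ω²) G₁₁ᴴ, G₂₂(x) + i q_P (μ_I/ω²) G₁₂ᴴ) and second column (−(μ_I ξ/ω²) G₁₁ᴴ e^{−i(q_P − q_S)x}, −(μ_I ξ/ω²) G₁₂ᴴ e^{−i(q_P − q_S)x}). Then for each fixed x ∈ [0, H] there exist C > 0 and R > 0 such that whenever Re ξ ≥ R (and q_P, q_S are as above): ‖ℋ₀(x, ξ) − (−ξ(μ_I/ω²)·M₁ + G_H(x) + ξ⁻¹·M₂(x))‖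 ≤ C/|ξ|², where M₁ = [[G₁₁ᴴ, G₁₁ᴴ], [G₁₂ᴴ, G₁₂ᴴ]], G_H(x) = [[G₂₁(x), −(c_I x/2)G₁₁ᴴ], [G₂₂(x), −(c_I x/2)G₁₂ᴴ]], and M₂(x) = [[(μ_I/(2(λ_I + 2μ_I)))G₁₁ᴴ, −(ω² c_I² x²/(8μ_I))G₁₁ᴴ], [(μ_I/(2(λ_I + 2μ_I)))G₁₂ᴴ, −(ω² c_I² x²/(8μ_I))G₁₂ᴴ]]. -/

import Mathlib

set_option maxHeartbeats 1000000

attribute [local instance] Matrix.normedAddCommGroup Matrix.normedSpace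

lemma lemA (a : ℝ) (ha : 0 < a) (ξ w : ℂ)
    (hw : w ^ 2 = ξ ^ 2 - (a : ℂ)) (hwre : w.re < 0)
    (h1 : 1 ≤ ξ.re) (haξ : a ≤ ξ.re) :
    ‖w + ξ - (a : ℂ) / (2 * ξ)‖ ≤ a ^ 2 / (2 * ‖ξ‖ ^ 3) := by
  have habs : ξ.re ≤ ‖ξ‖ := Complex.re_le_norm ξ
  have hξ1 : 1 ≤ ‖ξ‖ := le_trans h1 habs
  have hξ0 : ξ ≠ 0 := by
    intro h; rw [h] at hξ1; simp at hξ1; linarith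
  have key : (w + ξ) * (2 * ξ - (w + ξ)) = (a : ℂ) := by linear_combination -hw
  have hlow : ξ.re ≤ ‖2 * ξ - (w + ξ)‖ := by
    have h2 : (2 * ξ - (w + ξ)) = ξ - w := by ring
    rw [h2]
    calc ξ.re ≤ (ξ - w).re := by simp [Complex.sub_re]; linarith
    _ ≤ ‖ξ - w‖ := Complex.re_le_norm _
  have hne : 2 * ξ - (w + ξ) ≠ 0 := by
    intro h; rw [h] at hlow; simp at hlow; linarith
  have hd_eq : w + ξ = (a : ℂ) / (2 * ξ - (w + ξ)) := by
    rw [eq_div_iff hne]; exact key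
  have hdabs : ‖w + ξ‖ = a / ‖2 * ξ - (w + ξ)‖ := by
    nth_rewrite 1 [hd_eq]
    rw [norm_div, Complex.norm_real, Real.norm_eq_abs, abs_of_pos ha]
  have hpos : 0 < ‖2 * ξ - (w + ξ)‖ := lt_of_lt_of_le (by linarith) hlow
  have hd1 : ‖w + ξ‖ ≤ 1 := by
    rw [hdabs, div_le_one hpos]; linarith
  have hlow2 : ‖ξ‖ ≤ ‖2 * ξ - (w + ξ)‖ := by
    have h3 := norm_sub_norm_le (2 * ξ) (w + ξ)
    have h2 : ‖2 * ξ‖ = 2 * ‖ξ‖ := by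
      rw [norm_mul]; simp
    linarith
  have hdξ : ‖w + ξ‖ ≤ a / ‖ξ‖ := by
    rw [hdabs]
    exact div_le_div_of_nonneg_left ha.le (by linarith) hlow2
  have hfin : w + ξ - (a : ℂ) / (2 * ξ) =
      (a : ℂ) * (w + ξ) / ((2 * ξ - (w + ξ)) * (2 * ξ)) := by
    rw [eq_div_iff (mul_ne_zero hne (mul_ne_zero two_ne_zero hξ0))]
    field_simp
    linear_combination (-2 * ξ) * hw
  rw [hfin, norm_div, norm_mul, norm_mul, Complex.norm_real, Real.norm_eq_abs, abs_of_pos ha]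
  have h2ξ : ‖2 * ξ‖ = 2 * ‖ξ‖ := by rw [norm_mul]; simp
  rw [h2ξ]
  calc a * ‖w + ξ‖ / (‖2 * ξ - (w + ξ)‖ * (2 * ‖ξ‖))
      ≤ a * (a / ‖ξ‖) / (‖ξ‖ * (2 * ‖ξ‖)) := by
        gcongr
    _ = a ^ 2 / (2 * ‖ξ‖ ^ 3) := by
        field_simp

lemma lemB (κ C₁ : ℝ) (hκ : 0 ≤ κ) (hC₁ : 0 ≤ C₁) (ξ e : ℂ)
    (hξ : κ + C₁ + 1 ≤ ‖ξ‖)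
    (he : ‖e - (κ : ℂ) / ξ‖ ≤ C₁ / ‖ξ‖ ^ 3) :
    ‖ξ * (Complex.exp e - 1) - (κ : ℂ) - (κ : ℂ) ^ 2 / (2 * ξ)‖ ≤
      ((κ + C₁) ^ 3 + 2 * C₁) / ‖ξ‖ ^ 2 := by
  have hξ1 : 1 ≤ ‖ξ‖ := by linarith
  have hξpos : 0 < ‖ξ‖ := by linarith
  have hξ0 : ξ ≠ 0 := by simpa using hξpos.ne'
  set A := ‖ξ‖ with hA
  have hu : ‖(κ : ℂ) / ξ‖ = κ / A := by
    rw [norm_div, Complex.norm_real, Real.norm_eq_abs, _root_.abs_of_nonneg hκ]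
  have hA3 : A ≤ A ^ 3 := le_self_pow₀ hξ1 (by norm_num)
  -- |e| ≤ (κ + C₁)/A ≤ 1
  have heabs : ‖e‖ ≤ (κ + C₁) / A := by
    have h1 : ‖e‖ ≤ ‖(κ : ℂ) / ξ‖ + ‖e - (κ : ℂ) / ξ‖ := by
      have := norm_add_le ((κ : ℂ) / ξ) (e - (κ : ℂ) / ξ)
      simpa using this
    have h2 : C₁ / A ^ 3 ≤ C₁ / A := by
      apply div_le_div_of_nonneg_left hC₁ hξpos hA3
    rw [hu] at h1
    have : ‖e‖ ≤ κ / A + C₁ / A := by linarith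
    calc ‖e‖ ≤ κ / A + C₁ / A := this
      _ = (κ + C₁) / A := by ring
  have he1 : ‖e‖ ≤ 1 := by
    refine heabs.trans ?_
    rw [div_le_one hξpos]; linarith
  -- exponential Taylor bound
  have hexp := Complex.exp_bound he1 (n := 3) (by norm_num)
  have hsum : (∑ m ∈ Finset.range 3, e ^ m / m.factorial) = 1 + e + e ^ 2 / 2 := by
    rw [Finset.sum_range_succ, Finset.sum_range_succ, Finset.sum_range_one]
    norm_num [Nat.factorial]
  rw [hsum] at hexp
  have hexp' : ‖Complex.exp e - (1 + e + e ^ 2 / 2)‖ ≤ ‖e‖ ^ 3 := by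
    refine hexp.trans ?_
    have : ((3 : ℕ).succ : ℝ) * (((3 : ℕ).factorial : ℝ) * 3)⁻¹ ≤ 1 := by norm_num [Nat.factorial]
    nlinarith [pow_nonneg (norm_nonneg e) 3, norm_nonneg e]
  -- decomposition
  have hdec : ξ * (Complex.exp e - 1) - (κ : ℂ) - (κ : ℂ) ^ 2 / (2 * ξ) =
      ξ * (Complex.exp e - (1 + e + e ^ 2 / 2)) + ξ * (e - (κ : ℂ) / ξ)
        + ξ * (e - (κ : ℂ) / ξ) * (e + (κ : ℂ) / ξ) / 2 := by
    field_simp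
    ring
  rw [hdec]
  have tri : ‖ξ * (Complex.exp e - (1 + e + e ^ 2 / 2)) + ξ * (e - (κ : ℂ) / ξ)
        + ξ * (e - (κ : ℂ) / ξ) * (e + (κ : ℂ) / ξ) / 2‖ ≤
      ‖ξ * (Complex.exp e - (1 + e + e ^ 2 / 2))‖ +
      ‖ξ * (e - (κ : ℂ) / ξ)‖ +
      ‖ξ * (e - (κ : ℂ) / ξ) * (e + (κ : ℂ) / ξ) / 2‖ := by
    calc _ ≤ ‖ξ * (Complex.exp e - (1 + e + e ^ 2 / 2)) + ξ * (e - (κ : ℂ) / ξ)‖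
        + ‖ξ * (e - (κ : ℂ) / ξ) * (e + (κ : ℂ) / ξ) / 2‖ := norm_add_le _ _
      _ ≤ _ := by gcongr; exact norm_add_le _ _
  refine tri.trans ?_
  -- term bounds
  have hT1 : ‖ξ * (Complex.exp e - (1 + e + e ^ 2 / 2))‖ ≤ (κ + C₁) ^ 3 / A ^ 2 := by
    rw [norm_mul]
    calc A * ‖Complex.exp e - (1 + e + e ^ 2 / 2)‖ ≤ A * ‖e‖ ^ 3 := by
          gcongr
      _ ≤ A * ((κ + C₁) / A) ^ 3 := by
          gcongr A * ?_ ^ 3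
      _ = (κ + C₁) ^ 3 / A ^ 2 := by field_simp
  have hT2 : ‖ξ * (e - (κ : ℂ) / ξ)‖ ≤ C₁ / A ^ 2 := by
    rw [norm_mul]
    calc A * ‖e - (κ : ℂ) / ξ‖ ≤ A * (C₁ / A ^ 3) := by gcongr
      _ = C₁ / A ^ 2 := by field_simp
  have hT3 : ‖ξ * (e - (κ : ℂ) / ξ) * (e + (κ : ℂ) / ξ) / 2‖ ≤ C₁ / A ^ 2 := by
    rw [norm_div, norm_mul, norm_mul]
    have hsum2 : ‖e + (κ : ℂ) / ξ‖ ≤ 2 := by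
      calc ‖e + (κ : ℂ) / ξ‖ ≤ ‖e‖ + ‖(κ : ℂ) / ξ‖ :=
            norm_add_le _ _
        _ ≤ (κ + C₁) / A + κ / A := by rw [hu]; gcongr <;> simp [heabs]
        _ ≤ 2 := by
            have h1 : (κ + C₁) / A ≤ 1 := by rw [div_le_one hξpos]; linarith
            have h2 : κ / A ≤ 1 := by rw [div_le_one hξpos]; linarith
            linarith
    have habs2 : ‖(2 : ℂ)‖ = 2 := by norm_num
    rw [habs2]
    calc A * ‖e - (κ : ℂ) / ξ‖ * ‖e + (κ : ℂ) / ξ‖ / 2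
        ≤ A * (C₁ / A ^ 3) * 2 / 2 := by gcongr <;> positivity
      _ = C₁ / A ^ 2 := by field_simp
  calc _ ≤ (κ + C₁) ^ 3 / A ^ 2 + C₁ / A ^ 2 + C₁ / A ^ 2 := by gcongr
    _ = ((κ + C₁) ^ 3 + 2 * C₁) / A ^ 2 := by ring

lemma auxA {A : ℝ} (h1 : 1 ≤ A) : A ^ 2 ≤ 2 * A ^ 3 := by nlinarith

theorem unperturbed_faddeev_asymptotics (lamI muI om : ℝ) (hlam : 0 < lamI)
    (hmu : 0 < muI) (hom : 0 < om) (hlm : 0 < lamI + 2 * muI)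
    (G11H G12H G21H G22H : ℂ) (H : ℝ) (hH : 0 < H)
    (x : ℝ) (hx : x ∈ Set.Icc 0 H) :
    let cI : ℝ := (lamI + muI) / (lamI + 2 * muI)
    let G21 : ℝ → ℂ := fun t => -((cI : ℂ) / 2) * G11H * ((t : ℂ) - (H : ℂ)) + G21H
    let G22 : ℝ → ℂ := fun t => -((cI : ℂ) / 2) * G12H * ((t : ℂ) - (H : ℂ)) + G22H
    let GH : ℝ → Matrix (Fin 2) (Fin 2) ℂ := fun t =>
      !![G21 t, -((cI : ℂ) * t / 2) * G11H; G22 t, -((cI : ℂ) * t / 2) * G12H]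
    let M₁ : Matrix (Fin 2) (Fin 2) ℂ := !![G11H, G11H; G12H, G12H]
    let M₂ : ℝ → Matrix (Fin 2) (Fin 2) ℂ := fun t =>
      !![((muI : ℂ) / (2 * ((lamI : ℂ) + 2 * muI))) * G11H,
          -(((om : ℂ) ^ 2 * cI ^ 2 * t ^ 2) / (8 * muI)) * G11H;
        ((muI : ℂ) / (2 * ((lamI : ℂ) + 2 * muI))) * G12H,
          -(((om : ℂ) ^ 2 * cI ^ 2 * t ^ 2) / (8 * muI)) * G12H]
    ∃ C > (0 : ℝ), ∃ R > (0 : ℝ), ∀ ξ qP qS : ℂ,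
      qP ^ 2 = (om : ℂ) ^ 2 / ((lamI : ℂ) + 2 * muI) - ξ ^ 2 →
      qS ^ 2 = (om : ℂ) ^ 2 / (muI : ℂ) - ξ ^ 2 →
      0 < qP.im → 0 < qS.im → R ≤ ξ.re →
      ‖(!![G21 x + Complex.I * qP * ((muI : ℂ) / (om : ℂ) ^ 2) * G11H,
            -((muI : ℂ) * ξ / (om : ℂ) ^ 2) * G11H *
              Complex.exp (-Complex.I * (qP - qS) * (x : ℂ));
          G22 x + Complex.I * qP * ((muI : ℂ) / (om : ℂ) ^ 2) * G12H,
            -((muI : ℂ) * ξ / (om : ℂ) ^ 2) * G12H *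
              Complex.exp (-Complex.I * (qP - qS) * (x : ℂ))] : Matrix (Fin 2) (Fin 2) ℂ)
        - ((-ξ * ((muI : ℂ) / (om : ℂ) ^ 2)) • M₁ + GH x + ξ⁻¹ • M₂ x)‖
        ≤ C / ‖ξ‖ ^ 2 := by
  intro cI G21 G22 GH M₁ M₂
  obtain ⟨hx0, hxH⟩ := hx
  set a : ℝ := om ^ 2 / (lamI + 2 * muI) with ha_def
  set b : ℝ := om ^ 2 / muI with hb_def
  have ha : 0 < a := div_pos (pow_pos hom 2) hlm
  have hb : 0 < b := div_pos (pow_pos hom 2) hmu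
  have hab : a ≤ b := by
    apply div_le_div_of_nonneg_left (pow_pos hom 2).le hmu
    linarith
  set κ : ℝ := (b - a) * x / 2 with hκ_def
  have hκ0 : 0 ≤ κ := by
    apply div_nonneg _ (by norm_num)
    exact mul_nonneg (by linarith) hx0
  set C₁ : ℝ := x * (a ^ 2 + b ^ 2) / 2 with hC₁_def
  have hC₁0 : 0 ≤ C₁ := by positivity
  set Cb : ℝ := (κ + C₁) ^ 3 + 2 * C₁ with hCb_def
  have hCb0 : 0 ≤ Cb := by positivity
  set q : ℝ := muI / om ^ 2 with hq_def
  have hq : 0 < q := by positivity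
  set g1 : ℝ := ‖G11H‖ with hg1_def
  set g2 : ℝ := ‖G12H‖ with hg2_def
  have hg1 : 0 ≤ g1 := norm_nonneg _
  have hg2 : 0 ≤ g2 := norm_nonneg _
  refine ⟨q * g1 * a ^ 2 + q * g2 * a ^ 2 + q * g1 * Cb + q * g2 * Cb + 1, by positivity,
    1 + a + b + κ + C₁, by positivity, ?_⟩
  intro ξ qP qS hqP hqS himP himS hre
  have habs : ξ.re ≤ ‖ξ‖ := Complex.re_le_norm ξ
  have hA1 : 1 ≤ ‖ξ‖ := by linarith
  have hApos : 0 < ‖ξ‖ := by linarith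
  have hξ0 : ξ ≠ 0 := by simpa using hApos.ne'
  have hom' : (om : ℂ) ≠ 0 := by exact_mod_cast hom.ne'
  have hmu' : (muI : ℂ) ≠ 0 := by exact_mod_cast hmu.ne'
  have hlm' : (lamI : ℂ) + 2 * muI ≠ 0 := by
    have : ((lamI + 2 * muI : ℝ) : ℂ) ≠ 0 := by exact_mod_cast hlm.ne'
    push_cast at this; exact this
  have haC : ((a : ℝ) : ℂ) = (om : ℂ) ^ 2 / ((lamI : ℂ) + 2 * muI) := by
    rw [ha_def]; push_cast; ring
  have hbC : ((b : ℝ) : ℂ) = (om : ℂ) ^ 2 / (muI : ℂ) := by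
    rw [hb_def]; push_cast; ring
  -- square roots
  have hwP2 : (Complex.I * qP) ^ 2 = ξ ^ 2 - ((a : ℝ) : ℂ) := by
    rw [haC]; linear_combination qP ^ 2 * Complex.I_sq - hqP
  have hwS2 : (Complex.I * qS) ^ 2 = ξ ^ 2 - ((b : ℝ) : ℂ) := by
    rw [hbC]; linear_combination qS ^ 2 * Complex.I_sq - hqS
  have hwPre : (Complex.I * qP).re < 0 := by simp [Complex.mul_re]; linarith
  have hwSre : (Complex.I * qS).re < 0 := by simp [Complex.mul_re]; linarith
  have hdP := lemA a ha ξ (Complex.I * qP) hwP2 hwPre (by linarith) (by linarith)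
  have hdS := lemA b hb ξ (Complex.I * qS) hwS2 hwSre (by linarith) (by linarith)
  set A := ‖ξ‖ with hA_def
  have hκC : ((κ : ℝ) : ℂ) = (((b : ℝ) : ℂ) - ((a : ℝ) : ℂ)) * (x : ℂ) / 2 := by
    rw [hκ_def]; push_cast; ring
  have hee : (Complex.I * qS - Complex.I * qP) * (x : ℂ) - ((κ : ℝ) : ℂ) / ξ =
      (x : ℂ) * ((Complex.I * qS + ξ - ((b : ℝ) : ℂ) / (2 * ξ)) -
        (Complex.I * qP + ξ - ((a : ℝ) : ℂ) / (2 * ξ))) := by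
    rw [hκC]; field_simp; ring
  have heB : ‖(Complex.I * qS - Complex.I * qP) * (x : ℂ) - ((κ : ℝ) : ℂ) / ξ‖
      ≤ C₁ / A ^ 3 := by
    rw [hee, norm_mul, Complex.norm_real, Real.norm_eq_abs, _root_.abs_of_nonneg hx0]
    have h1 : ‖(Complex.I * qS + ξ - ((b : ℝ) : ℂ) / (2 * ξ)) -
        (Complex.I * qP + ξ - ((a : ℝ) : ℂ) / (2 * ξ))‖ ≤
        ‖Complex.I * qS + ξ - ((b : ℝ) : ℂ) / (2 * ξ)‖ +
        ‖Complex.I * qP + ξ - ((a : ℝ) : ℂ) / (2 * ξ)‖ := by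
      simpa using norm_sub_le (Complex.I * qS + ξ - ((b : ℝ) : ℂ) / (2 * ξ))
        (Complex.I * qP + ξ - ((a : ℝ) : ℂ) / (2 * ξ))
    calc x * ‖(Complex.I * qS + ξ - ((b : ℝ) : ℂ) / (2 * ξ)) -
          (Complex.I * qP + ξ - ((a : ℝ) : ℂ) / (2 * ξ))‖
        ≤ x * (b ^ 2 / (2 * A ^ 3) + a ^ 2 / (2 * A ^ 3)) := by
          exact mul_le_mul_of_nonneg_left (le_trans h1 (by linarith)) hx0
      _ = C₁ / A ^ 3 := by rw [hC₁_def]; ring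
  have hκC₁ : κ + C₁ + 1 ≤ A := by linarith
  have hB := lemB κ C₁ hκ0 hC₁0 ξ ((Complex.I * qS - Complex.I * qP) * (x : ℂ)) hκC₁ heB
  rw [← hCb_def] at hB
  rw [← hA_def] at hB
  have hA2pos : (0 : ℝ) < A ^ 2 := by positivity
  have hdP' : ‖Complex.I * qP + ξ - ((a : ℝ) : ℂ) / (2 * ξ)‖ ≤ a ^ 2 / A ^ 2 := by
    refine hdP.trans ?_
    exact div_le_div_of_nonneg_left (sq_nonneg a) hA2pos (auxA hA1)
  have hcI : cI = muI * (b - a) / om ^ 2 := by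
    unfold cI
    rw [hb_def, ha_def]; field_simp; ring
  have hEexp : Complex.exp (-Complex.I * (qP - qS) * (x : ℂ)) =
      Complex.exp ((Complex.I * qS - Complex.I * qP) * (x : ℂ)) := by congr 1; ring
  have hcIC : ((cI : ℝ) : ℂ) = (muI : ℂ) * (((b : ℝ) : ℂ) - ((a : ℝ) : ℂ)) / (om : ℂ) ^ 2 := by
    rw [hcI]; push_cast; ring
  have hconst : (muI : ℂ) / (2 * ((lamI : ℂ) + 2 * (muI : ℂ))) =
      ((muI : ℂ) / (om : ℂ) ^ 2) * (((a : ℝ) : ℂ) / 2) := by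
    rw [haC]; field_simp
  have hc1 : ((cI : ℝ) : ℂ) * (x : ℂ) / 2 = ((muI : ℂ) / (om : ℂ) ^ 2) * ((κ : ℝ) : ℂ) := by
    rw [hcIC, hκC]; field_simp
  have hc2 : (om : ℂ) ^ 2 * ((cI : ℝ) : ℂ) ^ 2 * (x : ℂ) ^ 2 / (8 * (muI : ℂ)) =
      ((muI : ℂ) / (om : ℂ) ^ 2) * (((κ : ℝ) : ℂ) ^ 2 / 2) := by
    rw [hcIC, hκC]; field_simp; ring
  have habsq : ‖(muI : ℂ) / (om : ℂ) ^ 2‖ = q := by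
    rw [hq_def, norm_div, norm_pow]
    simp [Complex.norm_real, Real.norm_eq_abs, _root_.abs_of_pos hmu, _root_.abs_of_pos hom]
  have hdS' : ‖Complex.I * qS + ξ - ((b : ℝ) : ℂ) / (2 * ξ)‖ ≤ b ^ 2 / A ^ 2 := by
    refine hdS.trans ?_
    exact div_le_div_of_nonneg_left (sq_nonneg b) hA2pos (auxA hA1)
  have t1 : 0 ≤ q * g1 * a ^ 2 := by positivity
  have t2 : 0 ≤ q * g2 * a ^ 2 := by positivity
  have t3 : 0 ≤ q * g1 * Cb := by positivity
  have t4 : 0 ≤ q * g2 * Cb := by positivity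
  have hCnn : 0 ≤ (q * g1 * a ^ 2 + q * g2 * a ^ 2 + q * g1 * Cb + q * g2 * Cb + 1) / A ^ 2 :=
    div_nonneg (by linarith) (sq_nonneg A)
  rw [Matrix.norm_le_iff hCnn]
  intro i j
  unfold GH M₁ M₂ G21 G22
  clear_value A a b κ C₁ Cb q g1 g2 cI G21 G22 GH M₁ M₂
  fin_cases i <;> fin_cases j <;>
    simp only [Fin.zero_eta, Fin.mk_one, Matrix.sub_apply, Matrix.add_apply, Matrix.smul_apply,
      Matrix.cons_val', Matrix.cons_val_zero, Matrix.cons_val_one, Matrix.head_cons,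
      Matrix.head_fin_const, Matrix.empty_val', Matrix.cons_val_fin_one, Matrix.of_apply,
      smul_eq_mul]
  · have key : -((cI : ℂ) / 2) * G11H * ((x : ℂ) - (H : ℂ)) + G21H +
        Complex.I * qP * ((muI : ℂ) / (om : ℂ) ^ 2) * G11H -
        (-ξ * ((muI : ℂ) / (om : ℂ) ^ 2) * G11H +
          (-((cI : ℂ) / 2) * G11H * ((x : ℂ) - (H : ℂ)) + G21H) +
          ξ⁻¹ * ((muI : ℂ) / (2 * ((lamI : ℂ) + 2 * (muI : ℂ))) * G11H)) =
        ((muI : ℂ) / (om : ℂ) ^ 2) * G11H * (Complex.I * qP + ξ - ((a : ℝ) : ℂ) / (2 * ξ)) := by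
      rw [hconst]; ring
    rw [key, norm_mul, norm_mul, habsq, ← hg1_def]
    calc q * g1 * ‖Complex.I * qP + ξ - ((a : ℝ) : ℂ) / (2 * ξ)‖
        ≤ q * g1 * (a ^ 2 / A ^ 2) :=
          mul_le_mul_of_nonneg_left hdP' (mul_nonneg hq.le hg1)
      _ = (q * g1 * a ^ 2) / A ^ 2 := by ring
      _ ≤ _ := by
          apply (div_le_div_iff_of_pos_right hA2pos).mpr
          linarith
  · have key : -((muI : ℂ) * ξ / (om : ℂ) ^ 2) * G11H *
        Complex.exp (-Complex.I * (qP - qS) * (x : ℂ)) -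
        (-ξ * ((muI : ℂ) / (om : ℂ) ^ 2) * G11H + -((cI : ℂ) * (x : ℂ) / 2) * G11H +
          ξ⁻¹ * (-((om : ℂ) ^ 2 * ((cI : ℝ) : ℂ) ^ 2 * (x : ℂ) ^ 2 / (8 * (muI : ℂ))) * G11H)) =
        -(((muI : ℂ) / (om : ℂ) ^ 2) * G11H *
          (ξ * (Complex.exp ((Complex.I * qS - Complex.I * qP) * (x : ℂ)) - 1) -
            ((κ : ℝ) : ℂ) - ((κ : ℝ) : ℂ) ^ 2 / (2 * ξ))) := by
      rw [hEexp, hc1, hc2]; ring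
    rw [key, norm_neg, norm_mul, norm_mul, habsq, ← hg1_def]
    calc q * g1 * ‖ξ * (Complex.exp ((Complex.I * qS - Complex.I * qP) * (x : ℂ)) - 1) -
            ((κ : ℝ) : ℂ) - ((κ : ℝ) : ℂ) ^ 2 / (2 * ξ)‖
        ≤ q * g1 * (Cb / A ^ 2) :=
          mul_le_mul_of_nonneg_left hB (mul_nonneg hq.le hg1)
      _ = (q * g1 * Cb) / A ^ 2 := by ring
      _ ≤ _ := by
          apply (div_le_div_iff_of_pos_right hA2pos).mpr
          linarith
  · have key : -((cI : ℂ) / 2) * G12H * ((x : ℂ) - (H : ℂ)) + G22H +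
        Complex.I * qP * ((muI : ℂ) / (om : ℂ) ^ 2) * G12H -
        (-ξ * ((muI : ℂ) / (om : ℂ) ^ 2) * G12H +
          (-((cI : ℂ) / 2) * G12H * ((x : ℂ) - (H : ℂ)) + G22H) +
          ξ⁻¹ * ((muI : ℂ) / (2 * ((lamI : ℂ) + 2 * (muI : ℂ))) * G12H)) =
        ((muI : ℂ) / (om : ℂ) ^ 2) * G12H * (Complex.I * qP + ξ - ((a : ℝ) : ℂ) / (2 * ξ)) := by
      rw [hconst]; ring
    rw [key, norm_mul, norm_mul, habsq, ← hg2_def]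
    calc q * g2 * ‖Complex.I * qP + ξ - ((a : ℝ) : ℂ) / (2 * ξ)‖
        ≤ q * g2 * (a ^ 2 / A ^ 2) :=
          mul_le_mul_of_nonneg_left hdP' (mul_nonneg hq.le hg2)
      _ = (q * g2 * a ^ 2) / A ^ 2 := by ring
      _ ≤ _ := by
          apply (div_le_div_iff_of_pos_right hA2pos).mpr
          linarith
  · have key : -((muI : ℂ) * ξ / (om : ℂ) ^ 2) * G12H *
        Complex.exp (-Complex.I * (qP - qS) * (x : ℂ)) -
        (-ξ * ((muI : ℂ) / (om : ℂ) ^ 2) * G12H + -((cI : ℂ) * (x : ℂ) / 2) * G12H +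
          ξ⁻¹ * (-((om : ℂ) ^ 2 * ((cI : ℝ) : ℂ) ^ 2 * (x : ℂ) ^ 2 / (8 * (muI : ℂ))) * G12H)) =
        -(((muI : ℂ) / (om : ℂ) ^ 2) * G12H *
          (ξ * (Complex.exp ((Complex.I * qS - Complex.I * qP) * (x : ℂ)) - 1) -
            ((κ : ℝ) : ℂ) - ((κ : ℝ) : ℂ) ^ 2 / (2 * ξ))) := by
      rw [hEexp, hc1, hc2]; ring
    rw [key, norm_neg, norm_mul, norm_mul, habsq, ← hg2_def]
    calc q * g2 * ‖ξ * (Complex.exp ((Complex.I * qS - Complex.I * qP) * (x : ℂ)) - 1) -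
            ((κ : ℝ) : ℂ) - ((κ : ℝ) : ℂ) ^ 2 / (2 * ξ)‖
        ≤ q * g2 * (Cb / A ^ 2) :=
          mul_le_mul_of_nonneg_left hB (mul_nonneg hq.le hg2)
      _ = (q * g2 * Cb) / A ^ 2 := by ring
      _ ≤ _ := by
          apply (div_le_div_iff_of_pos_right hA2pos).mpr
          linarith
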